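/- Let G₁, G₂, H be φ-functions. If ‖f‖_{1,G₁} = ‖f‖_{1,G₂} for all measurable f, then ‖f‖_{1,G₁∘H} = ‖f‖_{1,G₂∘H} for all measurable f. -/

import Mathlib

open MeasureTheory Set

/-- A φ-function: continuous, strictly increasing on `[0,∞)`, `F(0)=0`, `F(1)=1`,
`F(t) → ∞`. -/
structure IsPhiFun (F : ℝ → ℝ) : Prop where
  cont : ContinuousOn F (Ici 0)
  strictMono : StrictMonoOn F (Ici 0)
  zero : F 0 = 0
  one : F 1 = 1
  tendsto : Filter.Tendsto F Filter.atTop Filter.atTop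

/-- `F̃(t) = 1/F(1/t)` for `t > 0`, and `F̃(0) = 0`. -/
noncomputable def phiTilde (F : ℝ → ℝ) (t : ℝ) : ℝ :=
  if 0 < t then (F t⁻¹)⁻¹ else 0

/-- The non-increasing rearrangement of `f` (measured on `[0,1]`). -/
noncomputable def decRearr (f : ℝ → ℝ) (x : ℝ) : ℝ :=
  sSup {t : ℝ | x ≤ (volume {y ∈ Icc (0:ℝ) 1 | t ≤ |f y|}).toReal}

/-- The Luxemburg norm on `[0,1]` associated with `G`. -/
noncomputable def luxNorm (G : ℝ → ℝ) (g : ℝ → ℝ) : ℝ :=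
  sInf {c : ℝ | 0 < c ∧ ∫ x in Icc (0:ℝ) 1, G (|g x| / c) ≤ 1}

/-- The Orlicz–Lorentz functional `‖f‖_{F,G} = ‖ f* ∘ F̃ ∘ G̃⁻¹ ‖_G`. -/
noncomputable def olNorm (F G : ℝ → ℝ) (f : ℝ → ℝ) : ℝ :=
  luxNorm G (fun x => decRearr f (phiTilde F (Function.invFun (phiTilde G) x)))

namespace OLaux

variable {K : ℝ → ℝ}

lemma phi_nonneg (hK : IsPhiFun K) {t : ℝ} (ht : 0 ≤ t) : 0 ≤ K t := by
  rcases eq_or_lt_of_le ht with h | h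
  · rw [← h, hK.zero]
  · rw [← hK.zero]
    exact le_of_lt (hK.strictMono (by simp) (le_of_lt h) h)

lemma phi_pos (hK : IsPhiFun K) {t : ℝ} (ht : 0 < t) : 0 < K t := by
  rw [← hK.zero]
  exact hK.strictMono (by simp) (le_of_lt ht) ht

lemma phi_mono (hK : IsPhiFun K) {s t : ℝ} (hs : 0 ≤ s) (hst : s ≤ t) : K s ≤ K t := by
  rcases eq_or_lt_of_le hst with h | h
  · rw [h]
  · exact le_of_lt (hK.strictMono hs (le_trans hs hst) h)

lemma phi_surj (hK : IsPhiFun K) {w : ℝ} (hw : 0 ≤ w) : ∃ t, 0 ≤ t ∧ K t = w := by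
  obtain ⟨T, hT, hT0⟩ := ((hK.tendsto.eventually_ge_atTop w).and (Filter.eventually_ge_atTop 0)).exists
  have h0T : (0:ℝ) ≤ T := hT0
  have : w ∈ Icc (K 0) (K T) := ⟨by rw [hK.zero]; exact hw, hT⟩
  obtain ⟨t, ht, hteq⟩ := intermediate_value_Icc h0T (hK.cont.mono (Icc_subset_Ici_self)) this
  exact ⟨t, ht.1, hteq⟩

open Classical in
/-- inverse of a φ-function on `[0,∞)` -/
noncomputable def pinv (K : ℝ → ℝ) (w : ℝ) : ℝ :=
  if h : ∃ t, 0 ≤ t ∧ K t = w then h.choose else 0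

lemma pinv_nonneg {w : ℝ} : 0 ≤ pinv K w := by
  unfold pinv; split_ifs with h
  · exact h.choose_spec.1
  · exact le_refl 0

lemma map_pinv (hK : IsPhiFun K) {w : ℝ} (hw : 0 ≤ w) : K (pinv K w) = w := by
  have h := phi_surj hK hw
  unfold pinv
  rw [dif_pos h]
  exact h.choose_spec.2

lemma pinv_map (hK : IsPhiFun K) {t : ℝ} (ht : 0 ≤ t) : pinv K (K t) = t := by
  have h1 : K (pinv K (K t)) = K t := map_pinv hK (phi_nonneg hK ht)
  exact hK.strictMono.injOn (pinv_nonneg) ht h1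

lemma pinv_lt (hK : IsPhiFun K) {w w' : ℝ} (hw : 0 ≤ w) (h : w < w') : pinv K w < pinv K w' := by
  by_contra hc
  push_neg at hc
  have := phi_mono hK pinv_nonneg hc
  rw [map_pinv hK hw, map_pinv hK (le_trans hw (le_of_lt h))] at this
  linarith

lemma pinv_le (hK : IsPhiFun K) {w w' : ℝ} (hw : 0 ≤ w) (h : w ≤ w') : pinv K w ≤ pinv K w' := by
  rcases eq_or_lt_of_le h with h | h
  · rw [h]
  · exact le_of_lt (pinv_lt hK hw h)

lemma pinv_one (hK : IsPhiFun K) : pinv K 1 = 1 := by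
  have := pinv_map hK (le_refl (0:ℝ) |>.trans zero_le_one)
  rw [hK.one] at this; exact this

lemma pinv_pos (hK : IsPhiFun K) {w : ℝ} (hw : 0 < w) : 0 < pinv K w := by
  rcases eq_or_lt_of_le (pinv_nonneg (K := K) (w := w)) with h | h
  · exfalso
    have := map_pinv hK (le_of_lt hw)
    rw [← h, hK.zero] at this; linarith
  · exact h

-- phiTilde lemmas
lemma phiTilde_of_pos {t : ℝ} (ht : 0 < t) : phiTilde K t = (K t⁻¹)⁻¹ := if_pos ht

lemma phiTilde_pos (hK : IsPhiFun K) {t : ℝ} (ht : 0 < t) : 0 < phiTilde K t := by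
  rw [phiTilde_of_pos ht]
  exact inv_pos.mpr (phi_pos hK (inv_pos.mpr ht))

lemma phiTilde_one (hK : IsPhiFun K) : phiTilde K 1 = 1 := by
  rw [phiTilde_of_pos one_pos]; simp [hK.one]

lemma phiTilde_lt (hK : IsPhiFun K) {s t : ℝ} (hs : 0 < s) (hst : s < t) :
    phiTilde K s < phiTilde K t := by
  have ht : 0 < t := lt_trans hs hst
  rw [phiTilde_of_pos hs, phiTilde_of_pos ht]
  have h1 : t⁻¹ < s⁻¹ := by
    apply inv_strictAnti₀ hs hst
  have h2 : K t⁻¹ < K s⁻¹ := hK.strictMono (le_of_lt (inv_pos.mpr ht)) (le_of_lt (inv_pos.mpr hs)) h1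
  exact inv_strictAnti₀ (phi_pos hK (inv_pos.mpr ht)) h2

lemma phiTilde_le_iff (hK : IsPhiFun K) {s t : ℝ} (hs : 0 < s) (ht : 0 < t) :
    phiTilde K s ≤ phiTilde K t ↔ s ≤ t := by
  constructor
  · intro hle
    by_contra hc
    push_neg at hc
    exact absurd hle (not_le.mpr (phiTilde_lt hK ht hc))
  · intro hle
    rcases eq_or_lt_of_le hle with h | h
    · rw [h]
    · exact le_of_lt (phiTilde_lt hK hs h)

lemma phiTilde_surj (hK : IsPhiFun K) {x : ℝ} (hx : 0 < x) :
    ∃ t, 0 < t ∧ phiTilde K t = x := by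
  refine ⟨(pinv K x⁻¹)⁻¹, inv_pos.mpr (pinv_pos hK (inv_pos.mpr hx)), ?_⟩
  rw [phiTilde_of_pos (inv_pos.mpr (pinv_pos hK (inv_pos.mpr hx))), inv_inv,
    map_pinv hK (le_of_lt (inv_pos.mpr hx)), inv_inv]

/-- the inner function in `olNorm` with `F = id` -/
lemma psi_spec (hK : IsPhiFun K) {x : ℝ} (hx : 0 < x) :
    0 < phiTilde (fun t => t) (Function.invFun (phiTilde K) x) ∧
    phiTilde K (phiTilde (fun t => t) (Function.invFun (phiTilde K) x)) = x := by
  obtain ⟨t, ht, hteq⟩ := phiTilde_surj hK hx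
  have h1 : phiTilde K (Function.invFun (phiTilde K) x) = x := Function.invFun_eq ⟨t, hteq⟩
  set y := Function.invFun (phiTilde K) x with hy
  have hy0 : 0 < y := by
    by_contra hc
    push_neg at hc
    rw [phiTilde, if_neg (not_lt.mpr hc)] at h1
    linarith
  have h2 : phiTilde (fun t => t) y = y := by
    rw [phiTilde, if_pos hy0, inv_inv]
  rw [h2]
  exact ⟨hy0, h1⟩

end OLaux


namespace OLaux

/-- a 3-step function on (0,1] -/
noncomputable def st (a₁ a₂ b₁ b₂ b₃ : ℝ) : ℝ → ℝ := fun y =>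
  if y ≤ 0 then 0 else if y ≤ a₁ then b₁ else if y ≤ a₂ then b₂ else if y ≤ 1 then b₃ else 0

variable {a₁ a₂ b₁ b₂ b₃ : ℝ}

structure StData (a₁ a₂ b₁ b₂ b₃ : ℝ) : Prop where
  ha₁ : 0 < a₁
  ha : a₁ ≤ a₂
  ha₂ : a₂ ≤ 1
  hb₃ : 0 ≤ b₃
  hb₂ : b₃ ≤ b₂
  hb₁ : b₂ ≤ b₁
  hb : 0 < b₁

lemma st_meas : Measurable (st a₁ a₂ b₁ b₂ b₃) := by
  unfold st
  apply Measurable.ite (measurableSet_le measurable_id measurable_const) measurable_const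
  apply Measurable.ite (measurableSet_le measurable_id measurable_const) measurable_const
  apply Measurable.ite (measurableSet_le measurable_id measurable_const) measurable_const
  exact Measurable.ite (measurableSet_le measurable_id measurable_const) measurable_const
    measurable_const

lemma st_nonneg (hd : StData a₁ a₂ b₁ b₂ b₃) (y : ℝ) : 0 ≤ st a₁ a₂ b₁ b₂ b₃ y := by
  unfold st
  have := hd.hb₃; have := hd.hb₂; have := hd.hb₁; have := hd.hb
  split_ifs <;> linarith

-- superlevel sets
lemma st_level0 (hd : StData a₁ a₂ b₁ b₂ b₃) {t : ℝ} (ht : t ≤ 0) :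
    {y ∈ Icc (0:ℝ) 1 | t ≤ |st a₁ a₂ b₁ b₂ b₃ y|} = Icc 0 1 := by
  ext y
  simp only [mem_setOf_eq, mem_Icc, and_iff_left_iff_imp]
  exact fun _ => le_trans ht (abs_nonneg _)

lemma st_level1 (hd : StData a₁ a₂ b₁ b₂ b₃) {t : ℝ} (ht0 : 0 < t) (ht : t ≤ b₃) :
    {y ∈ Icc (0:ℝ) 1 | t ≤ |st a₁ a₂ b₁ b₂ b₃ y|} = Ioc 0 1 := by
  have h2 := hd.hb₂; have h1 := hd.hb₁
  ext y
  simp only [mem_setOf_eq, mem_Icc, mem_Ioc]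
  constructor
  · rintro ⟨⟨hy0, hy1⟩, hyt⟩
    rcases eq_or_lt_of_le hy0 with h | h
    · exfalso
      rw [abs_of_nonneg (st_nonneg hd y)] at hyt
      unfold st at hyt
      rw [if_pos (le_of_eq h.symm)] at hyt
      linarith
    · exact ⟨h, hy1⟩
  · rintro ⟨hy0, hy1⟩
    refine ⟨⟨le_of_lt hy0, hy1⟩, ?_⟩
    rw [abs_of_nonneg (st_nonneg hd y)]
    unfold st
    rw [if_neg (not_le.mpr hy0)]
    split_ifs <;> linarith

lemma st_level2 (hd : StData a₁ a₂ b₁ b₂ b₃) {t : ℝ} (ht0 : b₃ < t) (ht : t ≤ b₂) :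
    {y ∈ Icc (0:ℝ) 1 | t ≤ |st a₁ a₂ b₁ b₂ b₃ y|} = Ioc 0 a₂ := by
  have h2 := hd.hb₂; have h1 := hd.hb₁; have h3 := hd.hb₃
  have ha2 := hd.ha₂; have ha := hd.ha; have ha1 := hd.ha₁
  ext y
  simp only [mem_setOf_eq, mem_Icc, mem_Ioc]
  constructor
  · rintro ⟨⟨hy0, hy1⟩, hyt⟩
    rw [abs_of_nonneg (st_nonneg hd y)] at hyt
    unfold st at hyt
    split_ifs at hyt with c1 c2 c3 c4 <;> try linarith
    · exact ⟨lt_of_not_ge c1, le_trans c2 ha⟩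
    · exact ⟨lt_of_not_ge c1, c3⟩
  · rintro ⟨hy0, hy2⟩
    refine ⟨⟨le_of_lt hy0, le_trans hy2 ha2⟩, ?_⟩
    rw [abs_of_nonneg (st_nonneg hd y)]
    unfold st
    rw [if_neg (not_le.mpr hy0)]
    split_ifs <;> linarith

lemma st_level3 (hd : StData a₁ a₂ b₁ b₂ b₃) {t : ℝ} (ht0 : b₂ < t) (ht : t ≤ b₁) :
    {y ∈ Icc (0:ℝ) 1 | t ≤ |st a₁ a₂ b₁ b₂ b₃ y|} = Ioc 0 a₁ := by
  have h2 := hd.hb₂; have h1 := hd.hb₁; have h3 := hd.hb₃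
  have ha2 := hd.ha₂; have ha := hd.ha; have ha1 := hd.ha₁
  ext y
  simp only [mem_setOf_eq, mem_Icc, mem_Ioc]
  constructor
  · rintro ⟨⟨hy0, hy1⟩, hyt⟩
    rw [abs_of_nonneg (st_nonneg hd y)] at hyt
    unfold st at hyt
    split_ifs at hyt with c1 c2 c3 c4 <;> try linarith
    exact ⟨lt_of_not_ge c1, c2⟩
  · rintro ⟨hy0, hy2⟩
    refine ⟨⟨le_of_lt hy0, le_trans hy2 (le_trans ha ha2)⟩, ?_⟩
    rw [abs_of_nonneg (st_nonneg hd y)]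
    unfold st
    rw [if_neg (not_le.mpr hy0), if_pos hy2]
    exact ht

lemma st_level4 (hd : StData a₁ a₂ b₁ b₂ b₃) {t : ℝ} (ht0 : b₁ < t) :
    {y ∈ Icc (0:ℝ) 1 | t ≤ |st a₁ a₂ b₁ b₂ b₃ y|} = ∅ := by
  have h2 := hd.hb₂; have h1 := hd.hb₁; have h3 := hd.hb₃
  ext y
  simp only [mem_setOf_eq, mem_empty_iff_false, iff_false, not_and]
  intro hy
  rw [abs_of_nonneg (st_nonneg hd y)]
  unfold st
  split_ifs <;> linarith

/-- the distribution value -/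
lemma st_dist (hd : StData a₁ a₂ b₁ b₂ b₃) (t : ℝ) :
    (volume {y ∈ Icc (0:ℝ) 1 | t ≤ |st a₁ a₂ b₁ b₂ b₃ y|}).toReal
      = if t ≤ 0 then 1 else if t ≤ b₃ then 1 else if t ≤ b₂ then a₂ else if t ≤ b₁ then a₁ else 0 := by
  have ha1 := hd.ha₁; have ha := hd.ha; have ha2 := hd.ha₂
  split_ifs with c1 c2 c3 c4
  · rw [st_level0 hd c1, Real.volume_Icc]; simp
  · rw [st_level1 hd (lt_of_not_ge c1) c2, Real.volume_Ioc]; simp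
  · rw [st_level2 hd (lt_of_not_ge c2) c3, Real.volume_Ioc]
    rw [ENNReal.toReal_ofReal (by linarith)]; ring
  · rw [st_level3 hd (lt_of_not_ge c3) c4, Real.volume_Ioc]
    rw [ENNReal.toReal_ofReal (by linarith)]; ring
  · rw [st_level4 hd (lt_of_not_ge c4)]; simp

/-- decRearr of the step function -/
lemma st_decRearr (hd : StData a₁ a₂ b₁ b₂ b₃) {x : ℝ} (hx : x ∈ Ioc (0:ℝ) 1) :
    decRearr (st a₁ a₂ b₁ b₂ b₃) x = st a₁ a₂ b₁ b₂ b₃ x := by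
  have ha1 := hd.ha₁; have ha := hd.ha; have ha2 := hd.ha₂
  have h2 := hd.hb₂; have h1 := hd.hb₁; have h3 := hd.hb₃
  obtain ⟨hx0, hx1⟩ := hx
  have key : {t : ℝ | x ≤ (volume {y ∈ Icc (0:ℝ) 1 | t ≤ |st a₁ a₂ b₁ b₂ b₃ y|}).toReal}
      = Iic (st a₁ a₂ b₁ b₂ b₃ x) := by
    ext t
    simp only [mem_setOf_eq, mem_Iic, st_dist hd t]
    unfold st
    rw [if_neg (not_le.mpr hx0)]
    split_ifs with d1 d2 c1 c2 c3 c4 <;>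
      first
        | (constructor <;> intro hh <;> linarith)
        | (simp_all; try constructor <;> intro hh <;> linarith)
  unfold decRearr
  rw [key, csSup_Iic]

end OLaux


namespace OLaux

variable {K : ℝ → ℝ} {a₁ a₂ b₁ b₂ b₃ : ℝ}

/-- the value of the Luxemburg integral of the step function -/
noncomputable def SA (K : ℝ → ℝ) (a₁ a₂ b₁ b₂ b₃ c : ℝ) : ℝ :=
  K (b₁ / c) * phiTilde K a₁ + K (b₂ / c) * (phiTilde K a₂ - phiTilde K a₁)
    + K (b₃ / c) * (1 - phiTilde K a₂)

section withData

variable (hK : IsPhiFun K) (hd : StData a₁ a₂ b₁ b₂ b₃)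
include hK hd

lemma xx1_pos : 0 < phiTilde K a₁ := phiTilde_pos hK hd.ha₁

lemma xx1_le_xx2 : phiTilde K a₁ ≤ phiTilde K a₂ :=
  (phiTilde_le_iff hK hd.ha₁ (lt_of_lt_of_le hd.ha₁ hd.ha)).mpr hd.ha

lemma xx2_le_one : phiTilde K a₂ ≤ 1 := by
  rw [← phiTilde_one hK]
  exact (phiTilde_le_iff hK (lt_of_lt_of_le hd.ha₁ hd.ha) one_pos).mpr hd.ha₂

lemma st_integral {c : ℝ} (hc : 0 < c) :
    ∫ x in Icc (0:ℝ) 1,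
        K (|(fun x => decRearr (st a₁ a₂ b₁ b₂ b₃)
            (phiTilde (fun t => t) (Function.invFun (phiTilde K) x))) x| / c)
      = SA K a₁ a₂ b₁ b₂ b₃ c := by
  set xx₁ := phiTilde K a₁ with hxx₁
  set xx₂ := phiTilde K a₂ with hxx₂
  have h01 : 0 < xx₁ := xx1_pos hK hd
  have h12 : xx₁ ≤ xx₂ := xx1_le_xx2 hK hd
  have h21 : xx₂ ≤ 1 := xx2_le_one hK hd
  set F : ℝ → ℝ := fun x => if x ≤ xx₁ then K (b₁/c) else if x ≤ xx₂ then K (b₂/c) else K (b₃/c)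
    with hF
  have hEq : EqOn (fun x => K (|(fun x => decRearr (st a₁ a₂ b₁ b₂ b₃)
      (phiTilde (fun t => t) (Function.invFun (phiTilde K) x))) x| / c)) F (Ioc 0 1) := by
    intro x hx
    obtain ⟨hy0, hyt⟩ := psi_spec hK hx.1
    set y := phiTilde (fun t => t) (Function.invFun (phiTilde K) x) with hy
    have hy1 : y ≤ 1 := by
      have : phiTilde K y ≤ phiTilde K 1 := by rw [hyt, phiTilde_one hK]; exact hx.2
      exact (phiTilde_le_iff hK hy0 one_pos).mp this
    have hdec : decRearr (st a₁ a₂ b₁ b₂ b₃) y = st a₁ a₂ b₁ b₂ b₃ y :=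
      st_decRearr hd ⟨hy0, hy1⟩
    simp only
    rw [← hy, hdec, abs_of_nonneg (st_nonneg hd y), hF]
    have hle1 : y ≤ a₁ ↔ x ≤ xx₁ := by
      rw [← hyt]; exact (phiTilde_le_iff hK hy0 hd.ha₁).symm
    have hle2 : y ≤ a₂ ↔ x ≤ xx₂ := by
      rw [← hyt]; exact (phiTilde_le_iff hK hy0 (lt_of_lt_of_le hd.ha₁ hd.ha)).symm
    by_cases c1 : x ≤ xx₁
    · have hst : st a₁ a₂ b₁ b₂ b₃ y = b₁ := by
        unfold st; rw [if_neg (not_le.mpr hy0), if_pos (hle1.mpr c1)]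
      simp only [hst, if_pos c1]
    · by_cases c2 : x ≤ xx₂
      · have hst : st a₁ a₂ b₁ b₂ b₃ y = b₂ := by
          unfold st
          rw [if_neg (not_le.mpr hy0), if_neg (fun hcon => c1 (hle1.mp hcon)),
            if_pos (hle2.mpr c2)]
        simp only [hst, if_neg c1, if_pos c2]
      · have hst : st a₁ a₂ b₁ b₂ b₃ y = b₃ := by
          unfold st
          rw [if_neg (not_le.mpr hy0), if_neg (fun hcon => c1 (hle1.mp hcon)),
            if_neg (fun hcon => c2 (hle2.mp hcon)), if_pos hy1]
        simp only [hst, if_neg c1, if_neg c2]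
  rw [integral_Icc_eq_integral_Ioc, setIntegral_congr_fun measurableSet_Ioc hEq]
  have hsplit1 : Ioc (0:ℝ) 1 = Ioc 0 xx₁ ∪ Ioc xx₁ 1 :=
    (Ioc_union_Ioc_eq_Ioc (le_of_lt h01) (le_trans h12 h21)).symm
  have hsplit2 : Ioc xx₁ 1 = Ioc xx₁ xx₂ ∪ Ioc xx₂ 1 :=
    (Ioc_union_Ioc_eq_Ioc h12 h21).symm
  have hvol : ∀ u v : ℝ, volume (Ioc u v) < ⊤ := by
    intro u v; rw [Real.volume_Ioc]; exact ENNReal.ofReal_lt_top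
  have hInt : ∀ (u v : ℝ) (C : ℝ), EqOn F (fun _ => C) (Ioc u v) → IntegrableOn F (Ioc u v) := by
    intro u v C hEq'
    exact (integrableOn_const (hvol u v).ne).congr_fun
      (fun x hx => (hEq' hx).symm) measurableSet_Ioc
  have e1 : EqOn F (fun _ => K (b₁/c)) (Ioc 0 xx₁) := by
    intro x hx; simp only [hF]; rw [if_pos hx.2]
  have e2 : EqOn F (fun _ => K (b₂/c)) (Ioc xx₁ xx₂) := by
    intro x hx; simp only [hF]; rw [if_neg (not_le.mpr hx.1), if_pos hx.2]
  have e3 : EqOn F (fun _ => K (b₃/c)) (Ioc xx₂ 1) := by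
    intro x hx; simp only [hF]
    rw [if_neg (not_le.mpr (lt_of_le_of_lt h12 hx.1)), if_neg (not_le.mpr hx.1)]
  have int2 : IntegrableOn F (Ioc xx₁ 1) := by
    rw [hsplit2]
    exact (hInt _ _ _ e2).union (hInt _ _ _ e3)
  rw [hsplit1, setIntegral_union (Set.Ioc_disjoint_Ioc_of_le le_rfl) measurableSet_Ioc
      (hInt _ _ _ e1) int2, hsplit2,
    setIntegral_union (Set.Ioc_disjoint_Ioc_of_le le_rfl) measurableSet_Ioc (hInt _ _ _ e2) (hInt _ _ _ e3),
    setIntegral_congr_fun measurableSet_Ioc e1,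
    setIntegral_congr_fun measurableSet_Ioc e2,
    setIntegral_congr_fun measurableSet_Ioc e3]
  rw [setIntegral_const, setIntegral_const, setIntegral_const,
    measureReal_def, measureReal_def, measureReal_def,
    Real.volume_Ioc, Real.volume_Ioc, Real.volume_Ioc,
    ENNReal.toReal_ofReal (by linarith), ENNReal.toReal_ofReal (by linarith),
    ENNReal.toReal_ofReal (by linarith)]
  unfold SA
  rw [← hxx₁, ← hxx₂]
  simp only [smul_eq_mul]
  ring

end withData

end OLaux


namespace OLaux

variable {K : ℝ → ℝ} {a₁ a₂ b₁ b₂ b₃ : ℝ}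

section withData2

variable (hK : IsPhiFun K) (hd : StData a₁ a₂ b₁ b₂ b₃)
include hK hd

lemma SA_strict_anti {c c' : ℝ} (hc : 0 < c) (hcc : c < c') :
    SA K a₁ a₂ b₁ b₂ b₃ c' < SA K a₁ a₂ b₁ b₂ b₃ c := by
  have h01 : 0 < phiTilde K a₁ := xx1_pos hK hd
  have h12 : phiTilde K a₁ ≤ phiTilde K a₂ := xx1_le_xx2 hK hd
  have h21 : phiTilde K a₂ ≤ 1 := xx2_le_one hK hd
  have hc' : 0 < c' := lt_trans hc hcc
  have hb2 : 0 ≤ b₂ := le_trans hd.hb₃ hd.hb₂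
  have hb3 : 0 ≤ b₃ := hd.hb₃
  have t1 : K (b₁ / c') * phiTilde K a₁ < K (b₁ / c) * phiTilde K a₁ := by
    apply mul_lt_mul_of_pos_right _ h01
    apply hK.strictMono (div_nonneg (le_of_lt hd.hb) (le_of_lt hc'))
      (div_nonneg (le_of_lt hd.hb) (le_of_lt hc))
    exact div_lt_div_of_pos_left hd.hb hc hcc
  have t2 : K (b₂ / c') * (phiTilde K a₂ - phiTilde K a₁)
      ≤ K (b₂ / c) * (phiTilde K a₂ - phiTilde K a₁) := by
    apply mul_le_mul_of_nonneg_right _ (by linarith)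
    apply phi_mono hK (div_nonneg hb2 (le_of_lt hc'))
    gcongr
  have t3 : K (b₃ / c') * (1 - phiTilde K a₂) ≤ K (b₃ / c) * (1 - phiTilde K a₂) := by
    apply mul_le_mul_of_nonneg_right _ (by linarith)
    apply phi_mono hK (div_nonneg hb3 (le_of_lt hc'))
    gcongr
  unfold SA
  linarith

lemma SA_cont : ContinuousOn (SA K a₁ a₂ b₁ b₂ b₃) (Ioi 0) := by
  have hb1 : 0 ≤ b₁ := le_of_lt hd.hb
  have hb2 : 0 ≤ b₂ := le_trans hd.hb₃ hd.hb₂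
  have hb3 : 0 ≤ b₃ := hd.hb₃
  have hdiv : ∀ b : ℝ, 0 ≤ b → ContinuousOn (fun c : ℝ => K (b / c)) (Ioi 0) := by
    intro b hb
    apply hK.cont.comp (continuousOn_const.div continuousOn_id
      (fun x hx => ne_of_gt hx))
    intro x hx
    exact div_nonneg hb (le_of_lt hx)
  unfold SA
  exact (((hdiv b₁ hb1).mul continuousOn_const).add
    ((hdiv b₂ hb2).mul continuousOn_const)).add ((hdiv b₃ hb3).mul continuousOn_const)

lemma SA_exists_one : ∃ c, 0 < c ∧ SA K a₁ a₂ b₁ b₂ b₃ c = 1 := by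
  have h01 : 0 < phiTilde K a₁ := xx1_pos hK hd
  have h12 : phiTilde K a₁ ≤ phiTilde K a₂ := xx1_le_xx2 hK hd
  have h21 : phiTilde K a₂ ≤ 1 := xx2_le_one hK hd
  have hb2 : 0 ≤ b₂ := le_trans hd.hb₃ hd.hb₂
  have hb3 : 0 ≤ b₃ := hd.hb₃
  -- upper endpoint
  set cp := max b₁ 1 with hcp
  have hcp0 : 0 < cp := lt_of_lt_of_le one_pos (le_max_right _ _)
  have hub : ∀ b : ℝ, 0 ≤ b → b ≤ b₁ → K (b / cp) ≤ 1 := by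
    intro b hb hbb
    have : b / cp ≤ 1 := by
      rw [div_le_one hcp0]
      exact le_trans hbb (le_max_left _ _)
    calc K (b / cp) ≤ K 1 := phi_mono hK (div_nonneg hb (le_of_lt hcp0)) this
    _ = 1 := hK.one
  have hup : SA K a₁ a₂ b₁ b₂ b₃ cp ≤ 1 := by
    unfold SA
    have u1 := hub b₁ (le_of_lt hd.hb) (le_refl _)
    have u2 := hub b₂ hb2 hd.hb₁
    have u3 := hub b₃ hb3 (le_trans hd.hb₂ hd.hb₁)
    have k1 : 0 ≤ K (b₁ / cp) := phi_nonneg hK (div_nonneg (le_of_lt hd.hb) (le_of_lt hcp0))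
    have k2 : 0 ≤ K (b₂ / cp) := phi_nonneg hK (div_nonneg hb2 (le_of_lt hcp0))
    have k3 : 0 ≤ K (b₃ / cp) := phi_nonneg hK (div_nonneg hb3 (le_of_lt hcp0))
    nlinarith [mul_le_mul_of_nonneg_right u1 (le_of_lt h01),
      mul_le_mul_of_nonneg_right u2 (by linarith : (0:ℝ) ≤ phiTilde K a₂ - phiTilde K a₁),
      mul_le_mul_of_nonneg_right u3 (by linarith : (0:ℝ) ≤ 1 - phiTilde K a₂)]
  -- lower endpoint
  have hxinv : (0:ℝ) < (phiTilde K a₁)⁻¹ := inv_pos.mpr h01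
  set p := pinv K (phiTilde K a₁)⁻¹ with hp
  have hp0 : 0 < p := pinv_pos hK hxinv
  set cm := b₁ / p with hcm
  have hcm0 : 0 < cm := div_pos hd.hb hp0
  have hKcm : K (b₁ / cm) = (phiTilde K a₁)⁻¹ := by
    have hbp : b₁ / cm = p := by
      rw [hcm]
      rw [div_div_eq_mul_div, mul_comm, mul_div_assoc, div_self (ne_of_gt hd.hb), mul_one]
    rw [hbp]
    exact map_pinv hK (le_of_lt hxinv)
  have hlow : 1 ≤ SA K a₁ a₂ b₁ b₂ b₃ cm := by
    unfold SA
    rw [hKcm]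
    have k2 : 0 ≤ K (b₂ / cm) := phi_nonneg hK (div_nonneg hb2 (le_of_lt hcm0))
    have k3 : 0 ≤ K (b₃ / cm) := phi_nonneg hK (div_nonneg hb3 (le_of_lt hcm0))
    have : (phiTilde K a₁)⁻¹ * phiTilde K a₁ = 1 := inv_mul_cancel₀ (ne_of_gt h01)
    nlinarith [mul_nonneg k2 (by linarith : (0:ℝ) ≤ phiTilde K a₂ - phiTilde K a₁),
      mul_nonneg k3 (by linarith : (0:ℝ) ≤ 1 - phiTilde K a₂)]
  -- IVT
  have hc00 : 0 < min cm cp := lt_min hcm0 hcp0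
  have hc0cp : min cm cp ≤ cp := min_le_right _ _
  have hA0 : 1 ≤ SA K a₁ a₂ b₁ b₂ b₃ (min cm cp) := by
    rcases le_total cm cp with h | h
    · rw [min_eq_left h]; exact hlow
    · rw [min_eq_right h]
      rcases eq_or_lt_of_le h with h' | h'
      · rw [h']; exact hlow
      · exact le_trans hlow (le_of_lt (SA_strict_anti hK hd hcp0 h'))
  have hsub : Icc (min cm cp) cp ⊆ Ioi 0 := fun x hx => lt_of_lt_of_le hc00 hx.1
  have := intermediate_value_Icc' hc0cp ((SA_cont hK hd).mono hsub)
    (⟨hup, hA0⟩ : (1:ℝ) ∈ Icc (SA K a₁ a₂ b₁ b₂ b₃ cp) (SA K a₁ a₂ b₁ b₂ b₃ (min cm cp)))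
  obtain ⟨c, hc, hceq⟩ := this
  exact ⟨c, lt_of_lt_of_le hc00 hc.1, hceq⟩

/-- the computation of the norm -/
lemma st_olNorm {c : ℝ} (hc : 0 < c) (hceq : SA K a₁ a₂ b₁ b₂ b₃ c = 1) :
    olNorm (fun t => t) K (st a₁ a₂ b₁ b₂ b₃) = c := by
  unfold olNorm luxNorm
  have hset : {c' : ℝ | 0 < c' ∧ ∫ x in Icc (0:ℝ) 1,
      K (|(fun x => decRearr (st a₁ a₂ b₁ b₂ b₃)
          (phiTilde (fun t => t) (Function.invFun (phiTilde K) x))) x| / c') ≤ 1} = Ici c := by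
    ext c'
    simp only [mem_setOf_eq, mem_Ici]
    constructor
    · rintro ⟨hc', hint⟩
      rw [st_integral hK hd hc'] at hint
      by_contra hcon
      push_neg at hcon
      have := SA_strict_anti hK hd hc' hcon
      rw [hceq] at this
      linarith
    · intro hcc
      have hc' : 0 < c' := lt_of_lt_of_le hc hcc
      refine ⟨hc', ?_⟩
      rw [st_integral hK hd hc']
      rcases eq_or_lt_of_le hcc with h | h
      · rw [← h, hceq]
      · rw [← hceq]
        exact le_of_lt (SA_strict_anti hK hd hc h)
  rw [hset, csInf_Ici]

end withData2

end OLaux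


namespace OLaux

variable {G₁ G₂ : ℝ → ℝ}

/-- `q(u) = G₂(G₁⁻¹(1+u)) - 1` -/
noncomputable def qq (G₁ G₂ : ℝ → ℝ) (u : ℝ) : ℝ := G₂ (pinv G₁ (1 + u)) - 1

section qfacts

variable (hG₁ : IsPhiFun G₁) (hG₂ : IsPhiFun G₂)
include hG₁ hG₂

lemma hh_lt {w w' : ℝ} (hw : 0 ≤ w) (h : w < w') :
    G₂ (pinv G₁ w) < G₂ (pinv G₁ w') :=
  hG₂.strictMono pinv_nonneg pinv_nonneg (pinv_lt hG₁ hw h)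

lemma qq_lt {u v : ℝ} (hu : 0 ≤ u) (h : u < v) : qq G₁ G₂ u < qq G₁ G₂ v := by
  unfold qq
  have := hh_lt hG₁ hG₂ (by linarith : (0:ℝ) ≤ 1 + u) (by linarith : 1 + u < 1 + v)
  linarith

lemma qq_zero : qq G₁ G₂ 0 = 0 := by
  unfold qq
  rw [add_zero, pinv_one hG₁, hG₂.one]
  ring

lemma qq_pos {u : ℝ} (hu : 0 < u) : 0 < qq G₁ G₂ u := by
  have := qq_lt hG₁ hG₂ (le_refl 0) hu
  rw [qq_zero hG₁ hG₂] at this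
  exact this

lemma qq_le {u v : ℝ} (hu : 0 ≤ u) (h : u ≤ v) : qq G₁ G₂ u ≤ qq G₁ G₂ v := by
  rcases eq_or_lt_of_le h with h | h
  · rw [h]
  · exact le_of_lt (qq_lt hG₁ hG₂ hu h)

end qfacts

section derive

variable (hG₁ : IsPhiFun G₁) (hG₂ : IsPhiFun G₂)
variable (hfeed : ∀ a₁ a₂ b₁ b₂ b₃ c : ℝ, StData a₁ a₂ b₁ b₂ b₃ → 0 < c →
    SA G₁ a₁ a₂ b₁ b₂ b₃ c = 1 → SA G₂ a₁ a₂ b₁ b₂ b₃ c = 1)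
include hG₁ hG₂ hfeed

/-- the raw functional equation from 3-step norms -/
lemma raw {σ z : ℝ} (hσ : 0 < σ) (hz : σ ≤ z) :
    qq G₁ G₂ z * (1 + qq G₁ G₂ σ) = qq G₁ G₂ σ * (1 + qq G₁ G₂ (z + z/σ - 1)) := by
  have hz0 : 0 < z := lt_of_lt_of_le hσ hz
  set T₂ := 1 + σ with hT₂def
  set T₁ := (1 + σ) * z / σ with hT₁def
  have hT₂ : 1 < T₂ := by rw [hT₂def]; linarith
  have hT21 : T₂ ≤ T₁ := by
    rw [hT₂def, hT₁def, le_div_iff₀ hσ]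
    nlinarith
  have hT₁ : 1 < T₁ := lt_of_lt_of_le hT₂ hT21
  set s₁ := pinv G₁ T₁ with hs₁def
  set s₂ := pinv G₁ T₂ with hs₂def
  have hs₂ : 1 < s₂ := by
    have := pinv_lt hG₁ zero_le_one hT₂
    rw [pinv_one hG₁] at this
    exact this
  have hs₁ : 1 < s₁ := by
    have := pinv_lt hG₁ zero_le_one hT₁
    rw [pinv_one hG₁] at this
    exact this
  have hs21 : s₂ ≤ s₁ := pinv_le hG₁ (by linarith : (0:ℝ) ≤ T₂) hT21
  set b := pinv G₁ (1 + z) with hbdef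
  have hb1 : 1 ≤ b := by
    have := pinv_le hG₁ zero_le_one (by linarith : (1:ℝ) ≤ 1 + z)
    rw [pinv_one hG₁] at this
    exact this
  have hd : StData s₁⁻¹ s₂⁻¹ b 1 0 := by
    refine ⟨inv_pos.mpr (by linarith), ?_, ?_, le_refl 0, zero_le_one, hb1, by linarith⟩
    · exact inv_anti₀ (by linarith) hs21
    · exact inv_le_one_of_one_le₀ (le_of_lt hs₂)
  -- SA for G₁ at c = 1 equals 1
  have hG₁s₁ : G₁ s₁ = T₁ := map_pinv hG₁ (by linarith)
  have hG₁s₂ : G₁ s₂ = T₂ := map_pinv hG₁ (by linarith)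
  have hG₁b : G₁ b = 1 + z := map_pinv hG₁ (by linarith)
  have hpt : ∀ (G : ℝ → ℝ) (s : ℝ), 1 < s → phiTilde G (s⁻¹) = (G s)⁻¹ := by
    intro G s hs
    rw [phiTilde, if_pos (inv_pos.mpr (by linarith)), inv_inv]
  have hSA1 : SA G₁ s₁⁻¹ s₂⁻¹ b 1 0 1 = 1 := by
    unfold SA
    rw [hpt G₁ s₁ hs₁, hpt G₁ s₂ hs₂, div_one, div_one, div_one, hG₁s₁, hG₁s₂, hG₁b,
      hG₁.one, hG₁.zero, hT₁def, hT₂def]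
    have h1 : (1 + σ) * z / σ ≠ 0 := by positivity
    field_simp
    ring
  have hSA2 := hfeed _ _ _ _ _ _ hd one_pos hSA1
  unfold SA at hSA2
  rw [hpt G₂ s₁ hs₁, hpt G₂ s₂ hs₂, div_one, div_one, div_one, hG₂.one, hG₂.zero] at hSA2
  have hG₂s₁ : G₂ s₁ = 1 + qq G₁ G₂ (z + z/σ - 1) := by
    have hT : T₁ = 1 + (z + z/σ - 1) := by
      rw [hT₁def]; field_simp; ring
    rw [hs₁def, hT]
    unfold qq
    ring
  have hG₂s₂ : G₂ s₂ = 1 + qq G₁ G₂ σ := by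
    rw [hs₂def, hT₂def]
    unfold qq
    ring
  have hG₂b : G₂ b = 1 + qq G₁ G₂ z := by
    rw [hbdef]
    unfold qq
    ring
  rw [hG₂s₁, hG₂s₂, hG₂b] at hSA2
  set Qz := qq G₁ G₂ z with hQz
  set Qσ := qq G₁ G₂ σ with hQσ
  set QW := qq G₁ G₂ (z + z/σ - 1) with hQW
  have hWpos : 0 < z + z/σ - 1 := by
    have : 1 ≤ z/σ := (one_le_div hσ).mpr hz
    linarith
  have p1 : 0 < 1 + QW := by
    have := qq_pos hG₁ hG₂ hWpos
    rw [← hQW] at this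
    linarith
  have p2 : 0 < 1 + Qσ := by
    have := qq_pos hG₁ hG₂ hσ
    rw [← hQσ] at this
    linarith
  field_simp at hSA2
  have key : (1 + QW) * (Qz * (1 + Qσ) - Qσ * (1 + QW)) = 0 := by linear_combination (1 + QW) * hSA2
  rcases mul_eq_zero.mp key with hcase | hcase
  · linarith
  · linarith

end derive

end OLaux


namespace OLaux

variable {G₁ G₂ : ℝ → ℝ}

section derive2

variable (hG₁ : IsPhiFun G₁) (hG₂ : IsPhiFun G₂)
variable (hfeed : ∀ a₁ a₂ b₁ b₂ b₃ c : ℝ, StData a₁ a₂ b₁ b₂ b₃ → 0 < c →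
    SA G₁ a₁ a₂ b₁ b₂ b₃ c = 1 → SA G₂ a₁ a₂ b₁ b₂ b₃ c = 1)
include hG₁ hG₂ hfeed

lemma qq_one : qq G₁ G₂ 1 = 1 := by
  have hE1 := raw hG₁ hG₂ hfeed (by norm_num : (0:ℝ) < 1/2) (by norm_num : (1:ℝ)/2 ≤ 1)
  have hE2 := raw hG₁ hG₂ hfeed (by norm_num : (0:ℝ) < 1/3) (by norm_num : (1:ℝ)/3 ≤ 1/2)
  have hE3 := raw hG₁ hG₂ hfeed (by norm_num : (0:ℝ) < 1/3) (by norm_num : (1:ℝ)/3 ≤ 1)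
  have hE4 := raw hG₁ hG₂ hfeed (one_pos) (by norm_num : (1:ℝ) ≤ 2)
  rw [show (1:ℝ) + 1/(1/2) - 1 = 2 by norm_num] at hE1
  rw [show (1:ℝ)/2 + (1/2)/(1/3) - 1 = 1 by norm_num] at hE2
  rw [show (1:ℝ) + 1/(1/3) - 1 = 3 by norm_num] at hE3
  rw [show (2:ℝ) + 2/1 - 1 = 3 by norm_num] at hE4
  set k := qq G₁ G₂ 1 with hk
  set u2 := qq G₁ G₂ 2 with hu2
  set u3 := qq G₁ G₂ 3 with hu3
  set v2 := qq G₁ G₂ (1/2) with hv2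
  set v3 := qq G₁ G₂ (1/3) with hv3
  have hkpos : 0 < k := qq_pos hG₁ hG₂ one_pos
  have hku2 : k < u2 := qq_lt hG₁ hG₂ zero_le_one one_lt_two
  have hQ2 : v2 * (1 + u2 - k) = k := by linear_combination -hE1
  have hQ3 : v3 * (1 + k - v2) = v2 := by linear_combination -hE2
  have hQ1 : v3 * (u2*(1+k) - k^2) = k^2 := by linear_combination v3 * hE4 - k * hE3
  have hQ5 : v2 * u2 * (1+k) = k^2 * (1+k) := by
    linear_combination (1+k-v2) * hQ1 - (u2*(1+k) - k^2) * hQ3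
  have hQ4 : v2 * u2 = k^2 :=
    mul_right_cancel₀ (by positivity) hQ5
  have h6 : k * (k*(1+u2-k) - u2) = 0 := by
    linear_combination u2 * hQ2 - (1+u2-k) * hQ4
  have h7 : k*(1+u2-k) - u2 = 0 := by
    rcases mul_eq_zero.mp h6 with h | h
    · exact absurd h (ne_of_gt hkpos)
    · exact h
  have hfac : (k - 1) * (u2 - k) = 0 := by linear_combination h7
  rcases mul_eq_zero.mp hfac with h | h
  · linarith
  · linarith

lemma qq_inv {σ : ℝ} (hσ : 0 < σ) : qq G₁ G₂ σ * qq G₁ G₂ (1/σ) = 1 := by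
  have base : ∀ τ : ℝ, 0 < τ → τ ≤ 1 → qq G₁ G₂ τ * qq G₁ G₂ (1/τ) = 1 := by
    intro τ hτ hτ1
    have hE := raw hG₁ hG₂ hfeed hτ hτ1
    rw [show (1:ℝ) + 1/τ - 1 = 1/τ by ring] at hE
    rw [qq_one hG₁ hG₂ hfeed] at hE
    linear_combination -hE
  rcases le_or_gt σ 1 with h | h
  · exact base σ hσ h
  · have h1σ : 0 < 1/σ := by positivity
    have := base (1/σ) h1σ (by rw [div_le_one hσ] at *; linarith)
    rw [one_div_one_div] at this
    linarith [this]

lemma qq_mult {x y : ℝ} (hx : 0 < x) (hy : 1 ≤ y) :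
    1 + qq G₁ G₂ (x + y - 1) = qq G₁ G₂ x * (1 + qq G₁ G₂ (y/x)) := by
  have hy0 : 0 < y := lt_of_lt_of_le one_pos hy
  have hσ : 0 < x/y := by positivity
  have hz : x/y ≤ x := div_le_self (le_of_lt hx) hy
  have hE := raw hG₁ hG₂ hfeed hσ hz
  rw [show x + x/(x/y) - 1 = x + y - 1 by
    rw [div_div_eq_mul_div, mul_comm, mul_div_assoc, div_self (ne_of_gt hx), mul_one]] at hE
  have hinv := qq_inv hG₁ hG₂ hfeed hσ
  rw [one_div_div] at hinv
  set a := qq G₁ G₂ x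
  set b := qq G₁ G₂ (x/y)
  set c := qq G₁ G₂ (y/x)
  set W := qq G₁ G₂ (x + y - 1)
  linear_combination (-c) * hE + (a - (1+W)) * hinv

lemma qq_mul {x y : ℝ} (hx : 1 ≤ x) (hy : 1 ≤ y) :
    qq G₁ G₂ x * qq G₁ G₂ (y/x) = qq G₁ G₂ y := by
  have hx0 : 0 < x := lt_of_lt_of_le one_pos hx
  have hy0 : 0 < y := lt_of_lt_of_le one_pos hy
  have hm1 := qq_mult hG₁ hG₂ hfeed hx0 hy
  have hm2 := qq_mult hG₁ hG₂ hfeed hy0 hx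
  rw [show y + x - 1 = x + y - 1 by ring] at hm2
  have heq : qq G₁ G₂ x * (1 + qq G₁ G₂ (y/x)) = qq G₁ G₂ y * (1 + qq G₁ G₂ (x/y)) := by
    linarith
  have hinv := qq_inv hG₁ hG₂ hfeed (show (0:ℝ) < x/y by positivity)
  rw [one_div_div] at hinv
  set a := qq G₁ G₂ x
  set b := qq G₁ G₂ (x/y)
  set c := qq G₁ G₂ (y/x)
  set d := qq G₁ G₂ y
  have hcpos : 0 < c := qq_pos hG₁ hG₂ (by positivity)
  have hfac : (a*c - d)*(1 + c) = 0 := by linear_combination c * heq + d * hinv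
  rcases mul_eq_zero.mp hfac with h | h
  · linarith
  · linarith

lemma qq_two : qq G₁ G₂ 2 = 2 := by
  have h3 : 1 + qq G₁ G₂ 3 = qq G₁ G₂ 2 * (1 + qq G₁ G₂ 1) := by
    have := qq_mult hG₁ hG₂ hfeed (show (0:ℝ) < 2 by norm_num) (show (1:ℝ) ≤ 2 by norm_num)
    rw [show (2:ℝ) + 2 - 1 = 3 by norm_num, show (2:ℝ)/2 = 1 by norm_num] at this
    exact this
  rw [qq_one hG₁ hG₂ hfeed] at h3
  have h32 : qq G₁ G₂ 2 * qq G₁ G₂ (3/2) = qq G₁ G₂ 3 :=  by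
    have := qq_mul hG₁ hG₂ hfeed (show (1:ℝ) ≤ 2 by norm_num) (show (1:ℝ) ≤ 3 by norm_num)
    exact this
  have h4 : 1 + qq G₁ G₂ 4 = qq G₁ G₂ 2 * (1 + qq G₁ G₂ (3/2)) := by
    have := qq_mult hG₁ hG₂ hfeed (show (0:ℝ) < 2 by norm_num) (show (1:ℝ) ≤ 3 by norm_num)
    rw [show (2:ℝ) + 3 - 1 = 4 by norm_num] at this
    exact this
  have h42 : qq G₁ G₂ 2 * qq G₁ G₂ 2 = qq G₁ G₂ 4 := by
    have := qq_mul hG₁ hG₂ hfeed (show (1:ℝ) ≤ 2 by norm_num) (show (1:ℝ) ≤ 4 by norm_num)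
    rw [show (4:ℝ)/2 = 2 by norm_num] at this
    exact this
  have hfac : (qq G₁ G₂ 2 - 1) * (qq G₁ G₂ 2 - 2) = 0 := by nlinarith [h3, h32, h4, h42]
  have hgt : qq G₁ G₂ 1 < qq G₁ G₂ 2 := qq_lt hG₁ hG₂ zero_le_one one_lt_two
  rw [qq_one hG₁ hG₂ hfeed] at hgt
  rcases mul_eq_zero.mp hfac with h | h
  · linarith
  · linarith

lemma qq_pow2 (n : ℕ) : qq G₁ G₂ (2^n) = 2^n := by
  induction n with
  | zero => simpa using qq_one hG₁ hG₂ hfeed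
  | succ n ih =>
      have h2n : (1:ℝ) ≤ 2^n := one_le_pow₀ (by norm_num : (1:ℝ) ≤ 2)
      have h2n1 : (1:ℝ) ≤ 2^(n+1) := one_le_pow₀ (by norm_num : (1:ℝ) ≤ 2)
      have := qq_mul hG₁ hG₂ hfeed (show (1:ℝ) ≤ 2 by norm_num) h2n1
      rw [show (2:ℝ)^(n+1)/2 = 2^n by rw [pow_succ]; field_simp, ih,
        qq_two hG₁ hG₂ hfeed] at this
      rw [← this, pow_succ]
      ring

lemma qq_bounds {y : ℝ} (hy : 1 ≤ y) : qq G₁ G₂ y ≤ 2*y ∧ y ≤ 2 * qq G₁ G₂ y := by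
  have h2 : (1:ℝ) < 2 := one_lt_two
  obtain ⟨m, hm⟩ := pow_unbounded_of_one_lt y h2
  have hex : ∃ m : ℕ, y < 2^m := ⟨m, hm⟩
  classical
  have hyn : y < 2 ^ Nat.find hex := Nat.find_spec hex
  have hn0 : Nat.find hex ≠ 0 := by
    intro h0
    rw [h0] at hyn
    simp at hyn
    linarith
  obtain ⟨n', hn'⟩ := Nat.exists_eq_succ_of_ne_zero hn0
  rw [hn'] at hyn
  have hlow : (2:ℝ)^n' ≤ y := by
    by_contra hcon
    push_neg at hcon
    have := Nat.find_min hex (m := n') (by rw [hn']; exact Nat.lt_succ_self n')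
    exact this hcon
  constructor
  · calc qq G₁ G₂ y ≤ qq G₁ G₂ (2^(n'+1)) :=
          qq_le hG₁ hG₂ (by linarith) (le_of_lt hyn)
    _ = 2^(n'+1) := qq_pow2 hG₁ hG₂ hfeed (n'+1)
    _ = 2 * 2^n' := by rw [pow_succ]; ring
    _ ≤ 2 * y := by linarith
  · have : (2:ℝ)^n' = qq G₁ G₂ (2^n') := (qq_pow2 hG₁ hG₂ hfeed n').symm
    have hq : (2:ℝ)^n' ≤ qq G₁ G₂ y := by
      rw [this]
      exact qq_le hG₁ hG₂ (by positivity) hlow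
    have : y < 2 * 2^n' := by rw [← pow_succ']; exact hyn
    linarith

lemma qq_pow {x : ℝ} (hx : 1 ≤ x) (n : ℕ) : qq G₁ G₂ (x^n) = (qq G₁ G₂ x)^n := by
  induction n with
  | zero => simpa using qq_one hG₁ hG₂ hfeed
  | succ n ih =>
      have hxn : (1:ℝ) ≤ x^(n+1) := one_le_pow₀ hx
      have := qq_mul hG₁ hG₂ hfeed hx hxn
      rw [show x^(n+1)/x = x^n by
        rw [pow_succ]
        field_simp, ih] at this
      rw [← this, pow_succ]
      ring

lemma qq_id_ge1 {x : ℝ} (hx : 1 ≤ x) : qq G₁ G₂ x = x := by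
  have hx0 : 0 < x := lt_of_lt_of_le one_pos hx
  have hq1 : 1 ≤ qq G₁ G₂ x := by
    have := qq_le hG₁ hG₂ zero_le_one hx
    rw [qq_one hG₁ hG₂ hfeed] at this
    exact this
  have hq0 : 0 < qq G₁ G₂ x := by linarith
  by_contra hne
  rcases lt_or_gt_of_ne hne with hlt | hgt
  · -- qq x < x : (x / qq x)^n ≤ 2
    have hρ : 1 < x / qq G₁ G₂ x := (one_lt_div hq0).mpr hlt
    obtain ⟨n, hn⟩ := pow_unbounded_of_one_lt (2:ℝ) hρ
    have hb := (qq_bounds hG₁ hG₂ hfeed (one_le_pow₀ hx : (1:ℝ) ≤ x ^ n)).2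
    rw [qq_pow hG₁ hG₂ hfeed hx n] at hb
    have : (x / qq G₁ G₂ x)^n ≤ 2 := by
      rw [div_pow, div_le_iff₀ (by positivity)]
      linarith
    linarith
  · -- qq x > x : (qq x / x)^n ≤ 2
    have hρ : 1 < qq G₁ G₂ x / x := (one_lt_div hx0).mpr hgt
    obtain ⟨n, hn⟩ := pow_unbounded_of_one_lt (2:ℝ) hρ
    have hb := (qq_bounds hG₁ hG₂ hfeed (one_le_pow₀ hx : (1:ℝ) ≤ x ^ n)).1
    rw [qq_pow hG₁ hG₂ hfeed hx n] at hb
    have : (qq G₁ G₂ x / x)^n ≤ 2 := by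
      rw [div_pow, div_le_iff₀ (by positivity)]
      linarith
    linarith

lemma qq_id {u : ℝ} (hu : 0 < u) : qq G₁ G₂ u = u := by
  rcases le_or_gt 1 u with h | h
  · exact qq_id_ge1 hG₁ hG₂ hfeed h
  · have h1u : 1 ≤ 1/u := by
      rw [le_div_iff₀ hu]; linarith
    have := qq_inv hG₁ hG₂ hfeed hu
    rw [qq_id_ge1 hG₁ hG₂ hfeed h1u] at this
    field_simp at this
    linarith

/-- the conclusion of Part II : `G₁ = G₂` on `[0,∞)` -/
lemma G_eq {t : ℝ} (ht : 0 ≤ t) : G₁ t = G₂ t := by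
  rcases eq_or_lt_of_le ht with h0 | h0
  · rw [← h0, hG₁.zero, hG₂.zero]
  rcases lt_trichotomy t 1 with h1 | h1 | h1
  · -- 0 < t < 1 : the two-step instance
    have hG₁t1 : G₁ t < 1 := by
      have := hG₁.strictMono (le_of_lt h0) (mem_Ici.mpr zero_le_one) h1
      rw [hG₁.one] at this
      exact this
    have hG₁t0 : 0 < G₁ t := phi_pos hG₁ h0
    set s := pinv G₁ 2 with hs
    have hs1 : 1 < s := by
      have := pinv_lt hG₁ zero_le_one one_lt_two
      rw [pinv_one hG₁] at this
      exact this
    set b := pinv G₁ (2 - G₁ t) with hb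
    have htb : t < b := by
      have h1' : t = pinv G₁ (G₁ t) := (pinv_map hG₁ (le_of_lt h0)).symm
      rw [h1', hb]
      exact pinv_lt hG₁ (le_of_lt hG₁t0) (by linarith)
    have hd : StData s⁻¹ s⁻¹ b t t := by
      refine ⟨inv_pos.mpr (by linarith), le_refl _, inv_le_one_of_one_le₀ (le_of_lt hs1),
        le_of_lt h0, le_refl t, le_of_lt htb, by linarith⟩
    have hpt : ∀ (G : ℝ → ℝ) (s' : ℝ), 1 < s' → phiTilde G (s'⁻¹) = (G s')⁻¹ := by
      intro G s' hs'
      rw [phiTilde, if_pos (inv_pos.mpr (by linarith)), inv_inv]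
    have hG₁s : G₁ s = 2 := map_pinv hG₁ (by norm_num)
    have hG₁b : G₁ b = 2 - G₁ t := map_pinv hG₁ (by linarith)
    have hSA1 : SA G₁ s⁻¹ s⁻¹ b t t 1 = 1 := by
      unfold SA
      rw [hpt G₁ s hs1, div_one, div_one, hG₁s, hG₁b]
      norm_num
      ring
    have hSA2 := hfeed _ _ _ _ _ _ hd one_pos hSA1
    unfold SA at hSA2
    rw [hpt G₂ s hs1, div_one, div_one] at hSA2
    have hG₂s : G₂ s = 2 := by
      have : qq G₁ G₂ 1 = 1 := qq_one hG₁ hG₂ hfeed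
      unfold qq at this
      rw [show (1:ℝ) + 1 = 2 by norm_num] at this
      rw [hs]
      linarith
    have hG₂b : G₂ b = 2 - G₁ t := by
      have : qq G₁ G₂ (1 - G₁ t) = 1 - G₁ t := qq_id hG₁ hG₂ hfeed (by linarith)
      unfold qq at this
      rw [show (1:ℝ) + (1 - G₁ t) = 2 - G₁ t by ring] at this
      rw [hb]
      linarith
    rw [hG₂s, hG₂b] at hSA2
    norm_num at hSA2
    linarith
  · rw [h1, hG₁.one, hG₂.one]
  · -- t > 1
    have hG₁t : 1 < G₁ t := by
      have := hG₁.strictMono (mem_Ici.mpr zero_le_one) (le_of_lt (lt_trans one_pos h1)) h1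
      rw [hG₁.one] at this
      exact this
    have hq := qq_id hG₁ hG₂ hfeed (show 0 < G₁ t - 1 by linarith)
    unfold qq at hq
    rw [show 1 + (G₁ t - 1) = G₁ t by ring, pinv_map hG₁ ht] at hq
    linarith

end derive2

end OLaux


namespace OLaux

variable {G₁ G₂ : ℝ → ℝ}

lemma feed_of_h (hG₁ : IsPhiFun G₁) (hG₂ : IsPhiFun G₂)
    (h : ∀ f : ℝ → ℝ, Measurable f → olNorm (fun t => t) G₁ f = olNorm (fun t => t) G₂ f) :
    ∀ a₁ a₂ b₁ b₂ b₃ c : ℝ, StData a₁ a₂ b₁ b₂ b₃ → 0 < c →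
      SA G₁ a₁ a₂ b₁ b₂ b₃ c = 1 → SA G₂ a₁ a₂ b₁ b₂ b₃ c = 1 := by
  intro a₁ a₂ b₁ b₂ b₃ c hd hc h1
  have hn1 : olNorm (fun t => t) G₁ (st a₁ a₂ b₁ b₂ b₃) = c := st_olNorm hG₁ hd hc h1
  obtain ⟨c₂, hc₂, h2⟩ := SA_exists_one hG₂ hd
  have hn2 : olNorm (fun t => t) G₂ (st a₁ a₂ b₁ b₂ b₃) = c₂ := st_olNorm hG₂ hd hc₂ h2
  have hcc := h (OLaux.st a₁ a₂ b₁ b₂ b₃) (st_meas (a₁ := a₁) (a₂ := a₂) (b₁ := b₁) (b₂ := b₂) (b₃ := b₃))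
  rw [hn1, hn2] at hcc
  rw [← hcc] at h2
  exact h2

end OLaux

/-- for φ-functions `G₁, G₂, H`: if `‖f‖_{1,G₁} = ‖f‖_{1,G₂}` for all
measurable `f`, then `‖f‖_{1,G₁∘H} = ‖f‖_{1,G₂∘H}` for all measurable `f`. -/
theorem stmt_6 (G₁ G₂ H : ℝ → ℝ) (hG₁ : IsPhiFun G₁) (hG₂ : IsPhiFun G₂) (hH : IsPhiFun H)
    (h : ∀ f : ℝ → ℝ, Measurable f → olNorm (fun t => t) G₁ f = olNorm (fun t => t) G₂ f) :
    ∀ f : ℝ → ℝ, Measurable f →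
      olNorm (fun t => t) (G₁ ∘ H) f = olNorm (fun t => t) (G₂ ∘ H) f := by
  intro f _
  have hfeed := OLaux.feed_of_h hG₁ hG₂ h
  have hEq : ∀ t : ℝ, 0 ≤ t → G₁ t = G₂ t := fun t ht => OLaux.G_eq hG₁ hG₂ hfeed ht
  have hHn : ∀ u : ℝ, 0 ≤ u → 0 ≤ H u := fun u hu => OLaux.phi_nonneg hH hu
  have hcomp : phiTilde (G₁ ∘ H) = phiTilde (G₂ ∘ H) := by
    funext t
    unfold phiTilde
    split_ifs with ht
    · simp only [Function.comp_apply]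
      rw [hEq (H t⁻¹) (hHn _ (le_of_lt (inv_pos.mpr ht)))]
    · rfl
  have key : ∀ (g : ℝ → ℝ) (c : ℝ), 0 < c →
      (∫ x in Icc (0:ℝ) 1, (G₁ ∘ H) (|g x| / c)) = ∫ x in Icc (0:ℝ) 1, (G₂ ∘ H) (|g x| / c) := by
    intro g c hc
    have hfun : (fun x => (G₁ ∘ H) (|g x| / c)) = (fun x => (G₂ ∘ H) (|g x| / c)) := by
      funext x
      simp only [Function.comp_apply]
      rw [hEq _ (hHn _ (by positivity))]
    rw [hfun]
  unfold olNorm luxNorm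
  rw [hcomp]
  apply congrArg sInf
  ext c
  simp only [mem_setOf_eq]
  exact and_congr_right fun hc => by rw [key _ c hc]
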